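/- Let M be a real 3×3 matrix with det M > 0, set J = det M and form the Gram matrix g with entries g_{ij} = (M e_i) · (M e_j) for i,j ∈ {1,2}. Then J · ‖M⁻ᵀ e₃‖ = √(det g) = √(g₁₁ g₂₂ − g₁₂²). In particular, for a volume-preserving-oriented flow map η with a = (∂η)⁻¹ and boundary conormal N = e₃, one has J |aᵀ N| = √g, where g is the determinant of the metric induced on the image of the boundary by η. -/

import Mathlib

open scoped BigOperators
open Matrix

/-- **Area element identity** `J |aᵀN| = √g`. For a real `3×3` matrix `M` with
`det M > 0`, `J = det M`, and Gram matrix `g_{ij} = (M e_i)·(M e_j)` (`i,j ∈ {1,2}`), one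
has `J · ‖M⁻ᵀ e₃‖ = √(det g) = √(g₁₁ g₂₂ − g₁₂²)`. -/
theorem area_element_identity (M : Matrix (Fin 3) (Fin 3) ℝ) (hdet : 0 < M.det)
    (g : Matrix (Fin 2) (Fin 2) ℝ)
    (hg : ∀ i j : Fin 2, g i j =
      dotProduct (M.mulVec (Pi.single i.castSucc 1))
        (M.mulVec (Pi.single j.castSucc 1))) :
    M.det * Real.sqrt (dotProduct (fun α => M⁻¹ 2 α) (fun α => M⁻¹ 2 α))
        = Real.sqrt g.det ∧
      Real.sqrt g.det = Real.sqrt (g 0 0 * g 1 1 - g 0 1 ^ 2) := by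
  have h00 := hg 0 0
  have h01 := hg 0 1
  have h10 := hg 1 0
  have h11 := hg 1 1
  simp [dotProduct, Matrix.mulVec, Fin.sum_univ_three, Pi.single_apply,
    show ((0 : Fin 2).castSucc = (0 : Fin 3)) from rfl,
    show ((1 : Fin 2).castSucc = (1 : Fin 3)) from rfl] at h00 h01 h10 h11
  have hdetg : g.det = g 0 0 * g 1 1 - g 0 1 ^ 2 := by
    rw [Matrix.det_fin_two]
    have : g 1 0 = g 0 1 := by rw [h10, h01]; ring
    rw [this]; ring
  have hinv : ∀ α, M⁻¹ 2 α = (M.det)⁻¹ * M.adjugate 2 α := by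
    intro α
    rw [Matrix.inv_def]
    simp [Matrix.smul_apply, Ring.inverse_eq_inv]
  set K : ℝ := (M.adjugate 2 0) ^ 2 + (M.adjugate 2 1) ^ 2 + (M.adjugate 2 2) ^ 2 with hK
  have hdot : dotProduct (fun α => M⁻¹ 2 α) (fun α => M⁻¹ 2 α)
      = (M.det)⁻¹ ^ 2 * K := by
    simp [dotProduct, Fin.sum_univ_three, hinv, hK]; ring
  have hKnonneg : 0 ≤ K := by positivity
  have hadj := Matrix.adjugate_fin_three M
  have ha0 : M.adjugate 2 0 = M 1 0 * M 2 1 - M 1 1 * M 2 0 := by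
    rw [hadj]; rfl
  have ha1 : M.adjugate 2 1 = M 0 1 * M 2 0 - M 0 0 * M 2 1 := by
    rw [hadj]; change -(M 0 0 * M 2 1) + M 0 1 * M 2 0 = _; ring
  have ha2 : M.adjugate 2 2 = M 0 0 * M 1 1 - M 0 1 * M 1 0 := by
    rw [hadj]; rfl
  have hKg : K = g.det := by
    rw [hdetg, h00, h01, h11, hK, ha0, ha1, ha2]; ring
  constructor
  · rw [hdot, Real.sqrt_mul (by positivity), Real.sqrt_sq_eq_abs,
      abs_of_pos (by positivity : (0:ℝ) < (M.det)⁻¹), hKg.symm]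
    field_simp
  · rw [hdetg]
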